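/- Let H be a 2-graph with Euler characteristic χ(H) = 0 (for example a discrete 2-torus) and let G = H ⊕ K₁ be the cone over H, obtained by adding one apex vertex p joined by an edge to every vertex of H. Then G is contractible, χ(G) = 1, G is not a 3-graph (the unit sphere of p is H, which is not a 2-sphere), and every locally injective function on the vertices of G has more than two critical points. -/

import Mathlib

attribute [local instance] Classical.propDecidable

noncomputable section

/-- A finite simple graph on a vertex type `V`: a finite vertex set together with a
symmetric, irreflexive adjacency relation supported on the vertex set. -/
structure FSGraph (V : Type) where
  verts : Finset V
  Adj : V → V → Prop
  symm : ∀ {a b}, Adj a b → Adj b a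
  loopless : ∀ a, ¬ Adj a a
  supp : ∀ {a b}, Adj a b → a ∈ verts ∧ b ∈ verts

namespace FSGraph

variable {V : Type}

/-- The subgraph induced by the set of vertices satisfying `P`. -/
def induce (G : FSGraph V) (P : V → Prop) : FSGraph V where
  verts := G.verts.filter P
  Adj a b := G.Adj a b ∧ P a ∧ P b
  symm h := ⟨G.symm h.1, h.2.2, h.2.1⟩
  loopless a h := G.loopless a h.1
  supp h := ⟨Finset.mem_filter.mpr ⟨(G.supp h.1).1, h.2.1⟩,
             Finset.mem_filter.mpr ⟨(G.supp h.1).2, h.2.2⟩⟩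

/-- The unit sphere `S(x)`: the subgraph induced by the neighbours of `x`. -/
def sphere (G : FSGraph V) (x : V) : FSGraph V := G.induce (fun y => G.Adj x y)

/-- `G - x`: the subgraph induced by all vertices different from `x`. -/
def remove (G : FSGraph V) (x : V) : FSGraph V := G.induce (fun y => y ≠ x)

/-- Contractibility (in the sense of Evako/Knill): the one-point graph `K₁` is
contractible, and a graph is contractible if some vertex `x` has both `S(x)` and
`G - x` contractible.  The empty graph is not contractible. -/
inductive Contractible : FSGraph V → Prop
  | single (G : FSGraph V) (x : V) (h : G.verts = {x}) : Contractible G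
  | step (G : FSGraph V) (x : V) (hx : x ∈ G.verts)
      (hS : Contractible (G.sphere x)) (hR : Contractible (G.remove x)) :
      Contractible G

/-- `IsSphere d G`: `G` is a `d`-sphere.  The empty graph is the `(-1)`-sphere; for
`d ≥ 0`, a `d`-sphere is a nonempty graph all of whose unit spheres are
`(d-1)`-spheres (i.e. a `d`-graph) which becomes contractible after removing some
vertex. -/
inductive IsSphere : ℤ → FSGraph V → Prop
  | empty (G : FSGraph V) (h : G.verts = ∅) : IsSphere (-1) G
  | succ (d : ℤ) (G : FSGraph V) (hd : 0 ≤ d) (hne : G.verts.Nonempty)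
      (hunit : ∀ x ∈ G.verts, IsSphere (d - 1) (G.sphere x))
      (hpunct : ∃ x ∈ G.verts, Contractible (G.remove x)) :
      IsSphere d G

/-- A `d`-graph: a nonempty graph all of whose unit spheres are `(d-1)`-spheres. -/
def IsDGraph (d : ℤ) (G : FSGraph V) : Prop :=
  G.verts.Nonempty ∧ ∀ x ∈ G.verts, IsSphere (d - 1) (G.sphere x)

/-- A `d`-ball: a graph of the form `G - x` with `G` a `d`-sphere and `x` a vertex. -/
def IsBall (d : ℤ) (B : FSGraph V) : Prop :=
  ∃ (G : FSGraph V) (x : V), IsSphere d G ∧ x ∈ G.verts ∧ B = G.remove x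

/-- `f` is locally injective (a coloring): adjacent vertices get different values. -/
def LocallyInjective (G : FSGraph V) (f : V → ℝ) : Prop :=
  ∀ a b, G.Adj a b → f a ≠ f b

/-- `S_f^-(x)`: the subgraph of `S(x)` induced by `{y ∈ S(x) : f y < f x}`. -/
def subSphere (G : FSGraph V) (f : V → ℝ) (x : V) : FSGraph V :=
  (G.sphere x).induce (fun y => f y < f x)

/-- `S_f^+(x)`: the subgraph of `S(x)` induced by `{y ∈ S(x) : f y > f x}`. -/
def supSphere (G : FSGraph V) (f : V → ℝ) (x : V) : FSGraph V :=
  (G.sphere x).induce (fun y => f x < f y)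

/-- `x` is a critical point of `f` if at least one of `S_f^-(x)`, `S_f^+(x)` is
not contractible. -/
def IsCritical (G : FSGraph V) (f : V → ℝ) (x : V) : Prop :=
  ¬ Contractible (G.subSphere f x) ∨ ¬ Contractible (G.supSphere f x)

/-- `f` has exactly two critical points on the vertex set of `G`. -/
def ExactlyTwoCriticalPoints (G : FSGraph V) (f : V → ℝ) : Prop :=
  ∃ a b, a ∈ G.verts ∧ b ∈ G.verts ∧ a ≠ b ∧
    G.IsCritical f a ∧ G.IsCritical f b ∧
    ∀ x ∈ G.verts, G.IsCritical f x → x = a ∨ x = b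

/-- A simplex of `G`: a nonempty complete subgraph, given by its vertex set. -/
def IsSimplex (G : FSGraph V) (s : Finset V) : Prop :=
  s.Nonempty ∧ s ⊆ G.verts ∧ ∀ a ∈ s, ∀ b ∈ s, a ≠ b → G.Adj a b

/-- The finite set of simplices (nonempty complete subgraphs) of `G`. -/
def simplices (G : FSGraph V) : Finset (Finset V) :=
  G.verts.powerset.filter (fun s => G.IsSimplex s)

/-- The Barycentric refinement `G'`: vertices are the simplices of `G`, two simplices
being adjacent when one is a proper subset of the other. -/
def barycentric (G : FSGraph V) : FSGraph (Finset V) where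
  verts := G.simplices
  Adj s t := G.IsSimplex s ∧ G.IsSimplex t ∧ (s ⊂ t ∨ t ⊂ s)
  symm h := ⟨h.2.1, h.1, h.2.2.symm⟩
  loopless s h := by
    rcases h.2.2 with h' | h' <;> exact ssubset_irrefl s h'
  supp {s t} h :=
    ⟨Finset.mem_filter.mpr ⟨Finset.mem_powerset.mpr h.1.2.1, h.1⟩,
     Finset.mem_filter.mpr ⟨Finset.mem_powerset.mpr h.2.1.2.1, h.2.1⟩⟩

/-- The level surface `{f = c}` in the Barycentric refinement `G'`: the subgraph of
`G'` induced by the simplices on which `f - c` takes both positive and negative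
values. -/
def levelSurface (G : FSGraph V) (f : V → ℝ) (c : ℝ) : FSGraph (Finset V) :=
  G.barycentric.induce (fun s => (∃ a ∈ s, f a < c) ∧ (∃ b ∈ s, c < f b))

/-- `{f ≤ c}` in `G'`: the subgraph of `G'` induced by the simplices on which `f < c`
everywhere, together with those on which `f - c` takes both signs. -/
def subLevel (G : FSGraph V) (f : V → ℝ) (c : ℝ) : FSGraph (Finset V) :=
  G.barycentric.induce
    (fun s => (∀ a ∈ s, f a < c) ∨ ((∃ a ∈ s, f a < c) ∧ (∃ b ∈ s, c < f b)))

/-- `{f ≥ c}` in `G'`: the subgraph of `G'` induced by the simplices on which `f > c`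
everywhere, together with those on which `f - c` takes both signs. -/
def supLevel (G : FSGraph V) (f : V → ℝ) (c : ℝ) : FSGraph (Finset V) :=
  G.barycentric.induce
    (fun s => (∀ a ∈ s, c < f a) ∨ ((∃ a ∈ s, f a < c) ∧ (∃ b ∈ s, c < f b)))

/-- The center manifold `B_f(x) = {f = f x}` inside the Barycentric refinement
`S(x)'` of the unit sphere `S(x)`. -/
def centerManifold (G : FSGraph V) (f : V → ℝ) (x : V) : FSGraph (Finset V) :=
  (G.sphere x).levelSurface f (f x)

/-- Euler characteristic: `χ(G) = Σ_k (-1)^k c_k(G)` where `c_k(G)` counts the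
complete subgraphs with `k+1` vertices; equivalently the sum of `(-1)^(|s|-1)` over
all simplices `s`. -/
def euler (G : FSGraph V) : ℤ :=
  ∑ s ∈ G.simplices, (-1 : ℤ) ^ (s.card - 1)

end FSGraph

/-- The cone `H ⊕ K₁` over a graph `H`, obtained by adding one apex vertex `p`
joined by an edge to every vertex of `H`. -/
def FSGraph.cone {V : Type} (H : FSGraph V) (p : V) (hp : p ∉ H.verts) :
    FSGraph V where
  verts := insert p H.verts
  Adj a b := H.Adj a b ∨ (a = p ∧ b ∈ H.verts) ∨ (b = p ∧ a ∈ H.verts)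
  symm {a b} h := by
    rcases h with h | ⟨rfl, h⟩ | ⟨rfl, h⟩
    · exact Or.inl (H.symm h)
    · exact Or.inr (Or.inr ⟨rfl, h⟩)
    · exact Or.inr (Or.inl ⟨rfl, h⟩)
  loopless a h := by
    rcases h with h | ⟨rfl, h⟩ | ⟨rfl, h⟩
    · exact H.loopless a h
    · exact hp h
    · exact hp h
  supp {a b} h := by
    rcases h with h | ⟨rfl, h⟩ | ⟨rfl, h⟩
    · exact ⟨Finset.mem_insert_of_mem (H.supp h).1,
        Finset.mem_insert_of_mem (H.supp h).2⟩
    · exact ⟨Finset.mem_insert_self _ _, Finset.mem_insert_of_mem h⟩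
    · exact ⟨Finset.mem_insert_of_mem h, Finset.mem_insert_self _ _⟩

namespace FSGraph
variable {V : Type}

lemma graph_ext {G1 G2 : FSGraph V} (h1 : G1.verts = G2.verts)
    (h2 : ∀ a b, G1.Adj a b ↔ G2.Adj a b) : G1 = G2 := by
  cases G1; cases G2
  simp only [mk.injEq]
  refine ⟨h1, ?_⟩
  funext a b
  exact propext (h2 a b)

lemma induce_induce (G : FSGraph V) (P Q : V → Prop) :
    (G.induce P).induce Q = G.induce (fun y => P y ∧ Q y) := by
  apply graph_ext
  · simp only [induce, Finset.filter_filter]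
    ext y; simp
  · intro a b; simp only [induce]; tauto

lemma contractible_nonempty {G : FSGraph V} (h : Contractible G) : G.verts.Nonempty := by
  cases h with
  | single G x h => exact ⟨x, by simp [h]⟩
  | step G x hx _ _ => exact ⟨x, hx⟩

lemma not_contractible_empty {G : FSGraph V} (h : G.verts = ∅) : ¬ Contractible G := by
  intro hc
  rcases contractible_nonempty hc with ⟨x, hx⟩
  simp [h] at hx

lemma mem_simplices {G : FSGraph V} {s : Finset V} :
    s ∈ G.simplices ↔ G.IsSimplex s := by
  unfold simplices
  simp only [Finset.mem_filter, Finset.mem_powerset]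
  exact ⟨fun h => h.2, fun h => ⟨h.2.1, h⟩⟩

lemma empty_not_mem_simplices (G : FSGraph V) : (∅ : Finset V) ∉ G.simplices := by
  intro h
  exact Finset.not_nonempty_empty (mem_simplices.mp h).1

lemma cone_sum (K : FSGraph V) (x : V) (hx : x ∈ K.verts) (P : V → Prop)
    (hP : ∀ y, P y → K.Adj x y) :
    ∑ s ∈ K.simplices.filter (fun s => x ∈ s ∧ ∀ y ∈ s.erase x, P y),
      (-1:ℤ)^(s.card - 1) = 1 - (K.induce P).euler := by
  have hxnP : ¬ P x := fun h => K.loopless x (hP x h)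
  have key : ∑ s ∈ K.simplices.filter (fun s => x ∈ s ∧ ∀ y ∈ s.erase x, P y),
      (-1:ℤ)^(s.card - 1)
      = ∑ t ∈ insert (∅ : Finset V) (K.induce P).simplices, (-1:ℤ)^(t.card) := by
    apply Finset.sum_nbij' (i := fun s => s.erase x) (j := fun t => insert x t)
    · intro s hs
      simp only [Finset.mem_filter] at hs
      obtain ⟨hsimp, hxs, hPs⟩ := hs
      rw [mem_simplices] at hsimp
      rcases Finset.eq_empty_or_nonempty (s.erase x) with he | hne
      · simp [he]
      · apply Finset.mem_insert_of_mem
        rw [mem_simplices]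
        refine ⟨hne, ?_, ?_⟩
        · intro y hy
          simp only [induce, Finset.mem_filter]
          exact ⟨hsimp.2.1 (Finset.mem_of_mem_erase hy), hPs y hy⟩
        · intro a ha b hb hab
          refine ⟨hsimp.2.2 a (Finset.mem_of_mem_erase ha) b (Finset.mem_of_mem_erase hb) hab,
            hPs a ha, hPs b hb⟩
    · intro t ht
      simp only [Finset.mem_filter]
      rcases Finset.mem_insert.mp ht with rfl | ht
      · refine ⟨mem_simplices.mpr ⟨⟨x, Finset.mem_insert_self x ∅⟩, ?_, ?_⟩, by simp, by simp⟩
        · intro y hy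
          simp only [Finset.mem_insert, Finset.notMem_empty, or_false] at hy
          subst hy; exact hx
        · intro a ha b hb hab
          simp only [Finset.mem_insert, Finset.notMem_empty, or_false] at ha hb
          subst ha; subst hb; exact absurd rfl hab
      · rw [mem_simplices] at ht
        have hxt : x ∉ t := by
          intro hxt
          have := ht.2.1 hxt
          simp only [induce, Finset.mem_filter] at this
          exact hxnP this.2
        have hPt : ∀ y ∈ t, P y := by
          intro y hy
          have := ht.2.1 hy
          simp only [induce, Finset.mem_filter] at this
          exact this.2
        refine ⟨mem_simplices.mpr ⟨⟨x, Finset.mem_insert_self x t⟩, ?_, ?_⟩,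
          Finset.mem_insert_self x t, ?_⟩
        · intro y hy
          rcases Finset.mem_insert.mp hy with rfl | hy
          · exact hx
          · have := ht.2.1 hy
            simp only [induce, Finset.mem_filter] at this
            exact this.1
        · intro a ha b hb hab
          rcases Finset.mem_insert.mp ha with ha' | ha
          · rcases Finset.mem_insert.mp hb with hb' | hb
            · exact absurd (ha'.trans hb'.symm) hab
            · exact ha' ▸ hP b (hPt b hb)
          · rcases Finset.mem_insert.mp hb with hb' | hb
            · exact hb' ▸ K.symm (hP a (hPt a ha))
            · exact (ht.2.2 a ha b hb hab).1
        · intro y hy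
          rw [Finset.erase_insert hxt] at hy
          exact hPt y hy
    · intro s hs
      simp only [Finset.mem_filter] at hs
      exact Finset.insert_erase hs.2.1
    · intro t ht
      apply Finset.erase_insert
      rcases Finset.mem_insert.mp ht with rfl | ht
      · exact Finset.notMem_empty x
      · intro hxt
        have := (mem_simplices.mp ht).2.1 hxt
        simp only [induce, Finset.mem_filter] at this
        exact hxnP this.2
    · intro s hs
      simp only [Finset.mem_filter] at hs
      rw [Finset.card_erase_of_mem hs.2.1]
  rw [key, Finset.sum_insert (empty_not_mem_simplices _)]
  simp only [Finset.card_empty, pow_zero]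
  have : ∑ t ∈ (K.induce P).simplices, (-1:ℤ)^(t.card)
      = - (K.induce P).euler := by
    unfold euler
    rw [← Finset.sum_neg_distrib]
    apply Finset.sum_congr rfl
    intro t ht
    have h1 : 1 ≤ t.card := Finset.card_pos.mpr (mem_simplices.mp ht).1
    have h2 : (-1:ℤ)^t.card = -(-1:ℤ)^(t.card-1) := by
      conv_lhs => rw [show t.card = (t.card - 1) + 1 from by omega]
      rw [pow_succ]; ring
    rw [h2]
  rw [this]; ring
lemma simplices_induce (G : FSGraph V) (P : V → Prop) :
    (G.induce P).simplices = G.simplices.filter (fun s => ∀ y ∈ s, P y) := by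
  ext s
  simp only [Finset.mem_filter, mem_simplices]
  constructor
  · intro h
    have hPs : ∀ y ∈ s, P y := by
      intro y hy
      have := h.2.1 hy
      simp only [induce, Finset.mem_filter] at this
      exact this.2
    refine ⟨⟨h.1, ?_, fun a ha b hb hab => (h.2.2 a ha b hb hab).1⟩, hPs⟩
    intro y hy
    have := h.2.1 hy
    simp only [induce, Finset.mem_filter] at this
    exact this.1
  · intro ⟨hs, hPs⟩
    refine ⟨hs.1, ?_, fun a ha b hb hab => ⟨hs.2.2 a ha b hb hab, hPs a ha, hPs b hb⟩⟩
    intro y hy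
    simp only [induce, Finset.mem_filter]
    exact ⟨hs.2.1 hy, hPs y hy⟩

lemma simplices_remove (G : FSGraph V) (x : V) :
    (G.remove x).simplices = G.simplices.filter (fun s => x ∉ s) := by
  rw [remove, simplices_induce]
  ext s
  simp only [Finset.mem_filter, and_congr_right_iff]
  intro _
  exact ⟨fun h hxs => (h x hxs) rfl, fun h y hy hyx => h (hyx ▸ hy)⟩

lemma euler_remove_sphere (K : FSGraph V) (x : V) (hx : x ∈ K.verts) :
    K.euler = (K.remove x).euler + (1 - (K.sphere x).euler) := by
  have hsplit := Finset.sum_filter_add_sum_filter_not K.simplices (fun s => x ∈ s)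
    (fun s => (-1:ℤ)^(s.card - 1))
  have h1 : K.simplices.filter (fun s => x ∈ s)
      = K.simplices.filter (fun s => x ∈ s ∧ ∀ y ∈ s.erase x, K.Adj x y) := by
    ext s
    simp only [Finset.mem_filter, and_congr_right_iff]
    intro hs
    constructor
    · intro hxs
      refine ⟨hxs, fun y hy => ?_⟩
      have hys := Finset.mem_of_mem_erase hy
      have hyx := Finset.ne_of_mem_erase hy
      exact K.symm ((mem_simplices.mp hs).2.2 y hys x hxs hyx)
    · exact fun h => h.1
  have h2 : ∑ s ∈ K.simplices.filter (fun s => x ∈ s), (-1:ℤ)^(s.card - 1)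
      = 1 - (K.sphere x).euler := by
    rw [h1]
    exact cone_sum K x hx (fun y => K.Adj x y) (fun y h => h)
  have h3 : ∑ s ∈ K.simplices.filter (fun s => x ∉ s), (-1:ℤ)^(s.card - 1)
      = (K.remove x).euler := by
    unfold euler
    rw [simplices_remove]
  have h4 : K.euler = (∑ s ∈ K.simplices.filter (fun s => x ∈ s), (-1:ℤ)^(s.card - 1))
      + ∑ s ∈ K.simplices.filter (fun s => x ∉ s), (-1:ℤ)^(s.card - 1) := by
    rw [euler]; exact hsplit.symm
  rw [h4, h2, h3]; ring

lemma euler_empty {G : FSGraph V} (h : G.verts = ∅) : G.euler = 0 := by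
  unfold euler
  have : G.simplices = ∅ := by
    ext s
    simp only [mem_simplices, Finset.notMem_empty, iff_false]
    intro hs
    rcases hs.1 with ⟨y, hy⟩
    have := hs.2.1 hy
    simp [h] at this
  simp [this]

lemma euler_single {G : FSGraph V} {x : V} (h : G.verts = {x}) : G.euler = 1 := by
  unfold euler
  have : G.simplices = {({x} : Finset V)} := by
    ext s
    simp only [mem_simplices, Finset.mem_singleton]
    constructor
    · intro hs
      apply Finset.Subset.antisymm
      · intro y hy; have := hs.2.1 hy; rw [h] at this; exact this
      · rcases hs.1 with ⟨y, hy⟩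
        have := hs.2.1 hy; rw [h, Finset.mem_singleton] at this; subst this
        intro z hz; rw [Finset.mem_singleton] at hz; subst hz; exact hy
    · rintro rfl
      refine ⟨⟨x, Finset.mem_singleton_self x⟩, by rw [h], ?_⟩
      intro a ha b hb hab
      rw [Finset.mem_singleton] at ha hb
      exact absurd (ha.trans hb.symm) hab
  simp [this]

lemma contractible_euler {G : FSGraph V} (h : Contractible G) : G.euler = 1 := by
  induction h with
  | single G x hx => exact euler_single hx
  | step G x hx hS hR ihS ihR =>
    rw [euler_remove_sphere G x hx, ihS, ihR]
    ring
section Cone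
variable (H : FSGraph V) (p : V)

lemma cone_adj_apex (hp : p ∉ H.verts) {y : V} : (H.cone p hp).Adj p y ↔ y ∈ H.verts := by
  simp only [cone]
  constructor
  · rintro (h | ⟨-, h⟩ | ⟨rfl, h⟩)
    · exact absurd (H.supp h).1 hp
    · exact h
    · exact h
  · intro h; exact Or.inr (Or.inl ⟨trivial, h⟩)

lemma cone_adj_of_ne (hp : p ∉ H.verts) {a b : V} (ha : a ≠ p) (hb : b ≠ p) :
    (H.cone p hp).Adj a b ↔ H.Adj a b := by
  simp only [cone]
  constructor
  · rintro (h | ⟨rfl, h⟩ | ⟨rfl, h⟩)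
    · exact h
    · exact absurd rfl ha
    · exact absurd rfl hb
  · exact Or.inl

lemma mem_of_cone_adj (hp : p ∉ H.verts) {a b : V} (h : (H.cone p hp).Adj a b) (ha : a ≠ p) : a ∈ H.verts := by
  rcases h with h | ⟨rfl, h⟩ | ⟨rfl, h⟩
  · exact (H.supp h).1
  · exact absurd rfl ha
  · exact h

lemma ne_p_of_mem (hp : p ∉ H.verts) {a : V} (h : a ∈ H.verts) : a ≠ p := fun h' => hp (h' ▸ h)

lemma sphere_cone_apex (hp : p ∉ H.verts) : (H.cone p hp).sphere p = H := by
  apply graph_ext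
  · ext y
    simp only [sphere, induce, Finset.mem_filter, cone_adj_apex]
    constructor
    · exact fun h => h.2
    · exact fun h => ⟨Finset.mem_insert_of_mem h, h⟩
  · intro a b
    simp only [sphere, induce, cone_adj_apex]
    constructor
    · intro ⟨hab, ha, hb⟩
      exact (cone_adj_of_ne H p hp (ne_p_of_mem H p hp ha) (ne_p_of_mem H p hp hb)).mp hab
    · intro h
      exact ⟨(cone_adj_of_ne H p hp (ne_p_of_mem H p hp (H.supp h).1)
        (ne_p_of_mem H p hp (H.supp h).2)).mpr h, (H.supp h).1, (H.supp h).2⟩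

lemma remove_cone_apex (hp : p ∉ H.verts) : (H.cone p hp).remove p = H := by
  apply graph_ext
  · ext y
    simp only [remove, induce, Finset.mem_filter, cone]
    constructor
    · intro ⟨h1, h2⟩
      rcases Finset.mem_insert.mp h1 with rfl | h1
      · exact absurd rfl h2
      · exact h1
    · intro h
      exact ⟨Finset.mem_insert_of_mem h, ne_p_of_mem H p hp h⟩
  · intro a b
    simp only [remove, induce]
    constructor
    · intro ⟨hab, ha, hb⟩
      exact (cone_adj_of_ne H p hp ha hb).mp hab
    · intro h
      exact ⟨(cone_adj_of_ne H p hp (ne_p_of_mem H p hp (H.supp h).1)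
        (ne_p_of_mem H p hp (H.supp h).2)).mpr h,
        ne_p_of_mem H p hp (H.supp h).1, ne_p_of_mem H p hp (H.supp h).2⟩

lemma p_not_mem_sphere (hp : p ∉ H.verts) (x : V) : p ∉ (H.sphere x).verts := by
  simp only [sphere, induce, Finset.mem_filter]
  intro h; exact hp h.1

lemma p_not_mem_remove (hp : p ∉ H.verts) (x : V) : p ∉ (H.remove x).verts := by
  simp only [remove, induce, Finset.mem_filter]
  intro h; exact hp h.1

lemma sphere_cone_vertex (hp : p ∉ H.verts) {x : V} (hx : x ∈ H.verts) :
    (H.cone p hp).sphere x = (H.sphere x).cone p (p_not_mem_sphere H p hp x) := by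
  have hxp : x ≠ p := ne_p_of_mem H p hp hx
  apply graph_ext
  · ext y
    simp only [sphere, induce, cone, Finset.mem_filter, Finset.mem_insert]
    erw [@Finset.mem_filter _ _ (fun _ => Classical.propDecidable _)]
    simp only [Finset.mem_insert]
    constructor
    · intro ⟨h1, h2⟩
      by_cases hyp : y = p
      · exact Or.inl hyp
      · rcases h1 with rfl | h1
        · exact absurd rfl hyp
        · exact Or.inr ⟨h1, (cone_adj_of_ne H p hp hxp hyp).mp h2⟩
    · rintro (hyp | ⟨h1, h2⟩)
      · subst y
        exact ⟨Or.inl rfl, (H.cone p hp).symm ((cone_adj_apex H p hp).mpr hx)⟩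
      · exact ⟨Or.inr h1, (cone_adj_of_ne H p hp hxp (ne_p_of_mem H p hp h1)).mpr h2⟩
  · intro a b
    simp only [sphere, induce, cone, Finset.mem_filter]
    constructor
    · intro ⟨hab, ha, hb⟩
      by_cases hap : a = p
      · subst a
        have hbp : b ≠ p := fun h => (H.cone p hp).loopless p (h ▸ hab)
        refine Or.inr (Or.inl ⟨rfl, ?_, ?_⟩)
        · exact mem_of_cone_adj H p hp ((H.cone p hp).symm hab) hbp
        · exact (cone_adj_of_ne H p hp hxp hbp).mp hb
      · by_cases hbp : b = p
        · subst b
          refine Or.inr (Or.inr ⟨rfl, ?_, ?_⟩)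
          · exact mem_of_cone_adj H p hp hab hap
          · exact (cone_adj_of_ne H p hp hxp hap).mp ha
        · exact Or.inl ⟨(cone_adj_of_ne H p hp hap hbp).mp hab,
            (cone_adj_of_ne H p hp hxp hap).mp ha, (cone_adj_of_ne H p hp hxp hbp).mp hb⟩
    · rintro (⟨hab, ha, hb⟩ | ⟨hap', hb1, hb2⟩ | ⟨hbp', ha1, ha2⟩)
      · have hap := ne_p_of_mem H p hp (H.supp hab).1
        have hbp := ne_p_of_mem H p hp (H.supp hab).2
        exact ⟨(cone_adj_of_ne H p hp hap hbp).mpr hab,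
          (cone_adj_of_ne H p hp hxp hap).mpr ha, (cone_adj_of_ne H p hp hxp hbp).mpr hb⟩
      · subst a
        have hbp := ne_p_of_mem H p hp hb1
        exact ⟨(cone_adj_apex H p hp).mpr hb1,
          (H.cone p hp).symm ((cone_adj_apex H p hp).mpr hx),
          (cone_adj_of_ne H p hp hxp hbp).mpr hb2⟩
      · subst b
        have hap := ne_p_of_mem H p hp ha1
        exact ⟨(H.cone p hp).symm ((cone_adj_apex H p hp).mpr ha1),
          (cone_adj_of_ne H p hp hxp hap).mpr ha2,
          (H.cone p hp).symm ((cone_adj_apex H p hp).mpr hx)⟩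

lemma remove_cone_vertex (hp : p ∉ H.verts) {x : V} (hx : x ∈ H.verts) :
    (H.cone p hp).remove x = (H.remove x).cone p (p_not_mem_remove H p hp x) := by
  have hxp : x ≠ p := ne_p_of_mem H p hp hx
  apply graph_ext
  · ext y
    simp only [remove, induce, cone, Finset.mem_filter, Finset.mem_insert]
    constructor
    · intro ⟨h1, h2⟩
      rcases h1 with rfl | h1
      · exact Or.inl rfl
      · exact Or.inr ⟨h1, h2⟩
    · rintro (hyp | ⟨h1, h2⟩)
      · subst y
        exact ⟨Or.inl rfl, Ne.symm hxp⟩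
      · exact ⟨Or.inr h1, h2⟩
  · intro a b
    simp only [remove, induce, cone, Finset.mem_filter]
    constructor
    · intro ⟨hab, ha, hb⟩
      by_cases hap : a = p
      · subst a
        have hbp : b ≠ p := fun h => (H.cone p hp).loopless p (h ▸ hab)
        exact Or.inr (Or.inl ⟨rfl, mem_of_cone_adj H p hp ((H.cone p hp).symm hab) hbp, hb⟩)
      · by_cases hbp : b = p
        · subst b
          exact Or.inr (Or.inr ⟨rfl, mem_of_cone_adj H p hp hab hap, ha⟩)
        · exact Or.inl ⟨(cone_adj_of_ne H p hp hap hbp).mp hab, ha, hb⟩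
    · rintro (⟨hab, ha, hb⟩ | ⟨hap', hb1, hb2⟩ | ⟨hbp', ha1, ha2⟩)
      · have hap := ne_p_of_mem H p hp (H.supp hab).1
        have hbp := ne_p_of_mem H p hp (H.supp hab).2
        exact ⟨(cone_adj_of_ne H p hp hap hbp).mpr hab, ha, hb⟩
      · subst a
        exact ⟨(cone_adj_apex H p hp).mpr hb1, Ne.symm hxp, hb2⟩
      · subst b
        exact ⟨(H.cone p hp).symm ((cone_adj_apex H p hp).mpr ha1), ha2, Ne.symm hxp⟩

end Cone

lemma cone_contractible_aux : ∀ (n : ℕ) (H : FSGraph V) (p : V) (hp : p ∉ H.verts),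
    H.verts.card ≤ n → Contractible (H.cone p hp) := by
  intro n
  induction n with
  | zero =>
    intro H p hp hcard
    have : H.verts = ∅ := Finset.card_eq_zero.mp (Nat.le_zero.mp hcard)
    exact Contractible.single _ p (by simp [cone, this])
  | succ n IH =>
    intro H p hp hcard
    rcases Finset.eq_empty_or_nonempty H.verts with he | ⟨x, hx⟩
    · exact Contractible.single _ p (by simp [cone, he])
    · refine Contractible.step _ x (Finset.mem_insert_of_mem hx) ?_ ?_
      · rw [sphere_cone_vertex H p hp hx]
        apply IH
        have hsub : (H.sphere x).verts ⊆ H.verts.erase x := by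
          intro y hy
          simp only [sphere, induce, Finset.mem_filter] at hy
          exact Finset.mem_erase.mpr ⟨fun h => H.loopless x (h ▸ hy.2), hy.1⟩
        calc (H.sphere x).verts.card ≤ (H.verts.erase x).card := Finset.card_le_card hsub
          _ = H.verts.card - 1 := Finset.card_erase_of_mem hx
          _ ≤ n := by omega
      · rw [remove_cone_vertex H p hp hx]
        apply IH
        have : (H.remove x).verts = H.verts.erase x := by
          ext y
          simp only [remove, induce, Finset.mem_filter, Finset.mem_erase]
          tauto
        rw [this, Finset.card_erase_of_mem hx]
        omega

lemma cone_contractible (H : FSGraph V) (p : V) (hp : p ∉ H.verts) :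
    Contractible (H.cone p hp) :=
  cone_contractible_aux H.verts.card H p hp le_rfl

lemma euler_cone (H : FSGraph V) (p : V) (hp : p ∉ H.verts) :
    (H.cone p hp).euler = 1 :=
  contractible_euler (cone_contractible H p hp)

lemma sphere_euler {d : ℤ} {G : FSGraph V} (h : IsSphere d G) :
    G.euler = if Even d then 2 else 0 := by
  induction h with
  | empty G hG =>
    rw [euler_empty hG]
    norm_num [Int.even_iff]
  | succ d G hd hne hunit hpunct ih =>
    rcases hpunct with ⟨x, hx, hc⟩
    rw [euler_remove_sphere G x hx, contractible_euler hc, ih x hx]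
    have : Even (d - 1) ↔ ¬ Even d := by
      rw [Int.even_sub]
      simp [Int.even_iff]
    by_cases hE : Even d
    · rw [if_pos hE, if_neg (by tauto)]
      ring
    · rw [if_neg hE, if_pos (this.mpr hE)]
      ring
lemma subSphere_eq_induce (K : FSGraph V) (f : V → ℝ) (x : V) :
    K.subSphere f x = K.induce (fun y => K.Adj x y ∧ f y < f x) := by
  unfold subSphere sphere
  exact induce_induce K _ _

lemma supSphere_eq_induce (K : FSGraph V) (f : V → ℝ) (x : V) :
    K.supSphere f x = K.induce (fun y => K.Adj x y ∧ f x < f y) := by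
  unfold supSphere sphere
  exact induce_induce K _ _

lemma subSphere_neg (K : FSGraph V) (f : V → ℝ) (x : V) :
    K.subSphere (fun v => -(f v)) x = K.supSphere f x := by
  rw [subSphere_eq_induce, supSphere_eq_induce]
  apply graph_ext
  · ext y
    simp only [induce, Finset.mem_filter, neg_lt_neg_iff]
  · intro a b
    simp only [induce, neg_lt_neg_iff]

set_option maxHeartbeats 1000000 in
lemma morse_sub (K : FSGraph V) (f : V → ℝ) (hf : K.LocallyInjective f) :
    K.euler = ∑ x ∈ K.verts, (1 - (K.subSphere f x).euler) := by
  have cover : K.simplices = K.verts.biUnion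
      (fun x => K.simplices.filter (fun s => x ∈ s ∧ ∀ y ∈ s, y ≠ x → f y < f x)) := by
    ext s
    simp only [Finset.mem_biUnion, Finset.mem_filter]
    constructor
    · intro hs
      have hsimp := mem_simplices.mp hs
      obtain ⟨u, hu, hmax⟩ := Finset.exists_max_image s f hsimp.1
      refine ⟨u, hsimp.2.1 hu, hs, hu, ?_⟩
      intro y hy hyu
      have hne : f y ≠ f u := hf y u (hsimp.2.2 y hy u hu hyu)
      exact lt_of_le_of_ne (hmax y hy) hne
    · rintro ⟨x, -, hs, -⟩
      exact hs
  have hdisj : Set.PairwiseDisjoint (↑K.verts : Set V)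
      (fun x => K.simplices.filter (fun s => x ∈ s ∧ ∀ y ∈ s, y ≠ x → f y < f x)) := by
    intro x _ x' _ hxx'
    simp only [Finset.disjoint_left, Finset.mem_filter]
    rintro s ⟨-, hxs, hs⟩ ⟨-, hx's, hs'⟩
    exact absurd rfl (ne_of_lt (lt_trans (hs' x hxs hxx') (hs x' hx's (Ne.symm hxx')))).symm
  have : K.euler = ∑ x ∈ K.verts, ∑ s ∈ K.simplices.filter
      (fun s => x ∈ s ∧ ∀ y ∈ s, y ≠ x → f y < f x), (-1:ℤ)^(s.card - 1) := by
    rw [euler]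
    conv_lhs => rw [cover]
    exact Finset.sum_biUnion hdisj
  rw [this]
  apply Finset.sum_congr rfl
  intro x hx
  have hfilt : K.simplices.filter (fun s => x ∈ s ∧ ∀ y ∈ s, y ≠ x → f y < f x)
      = K.simplices.filter (fun s => x ∈ s ∧ ∀ y ∈ s.erase x, K.Adj x y ∧ f y < f x) := by
    ext s
    simp only [Finset.mem_filter, and_congr_right_iff]
    intro hs hxs
    constructor
    · intro h y hy
      have hys := Finset.mem_of_mem_erase hy
      have hyx := Finset.ne_of_mem_erase hy
      exact ⟨K.symm ((mem_simplices.mp hs).2.2 y hys x hxs hyx), h y hys hyx⟩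
    · intro h y hy hyx
      exact (h y (Finset.mem_erase.mpr ⟨hyx, hy⟩)).2
  rw [hfilt, subSphere_eq_induce]
  convert cone_sum K x hx (fun y => K.Adj x y ∧ f y < f x) (fun y h => h.1) using 2 with s
  · ext t
    simp only [Finset.mem_filter]

lemma morse_sup (K : FSGraph V) (f : V → ℝ) (hf : K.LocallyInjective f) :
    K.euler = ∑ x ∈ K.verts, (1 - (K.supSphere f x).euler) := by
  have hf' : K.LocallyInjective (fun v => -(f v)) := by
    intro a b hab
    simpa using (hf a b hab)
  have := morse_sub K (fun v => -(f v)) hf'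
  simpa only [subSphere_neg] using this
lemma sphere_neg_one_verts {d : ℤ} {G : FSGraph V} (h : IsSphere d G) (hd : d = -1) :
    G.verts = ∅ := by
  cases h with
  | empty G h => exact h
  | succ d G hd' hne hunit hpunct => omega

lemma contractible_no_adj_single {K : FSGraph V} (h : Contractible K)
    (hna : ∀ a b, ¬ K.Adj a b) : ∃ y, K.verts = {y} := by
  cases h with
  | single G x hx => exact ⟨x, hx⟩
  | step G x hx hS hR =>
    exfalso
    have hemp : (K.sphere x).verts = ∅ := by
      ext y
      simp only [sphere, induce, Finset.mem_filter, Finset.notMem_empty, iff_false]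
      rintro ⟨-, h2⟩
      exact hna x y h2
    exact not_contractible_empty hemp hS

lemma zero_sphere_no_adj {d : ℤ} {K : FSGraph V} (h : IsSphere d K) (hd : d = 0) :
    ∀ a b, ¬ K.Adj a b := by
  cases h with
  | empty G h => omega
  | succ d G hd' hne hunit hpunct =>
    intro a b hab
    have ha := (K.supp hab).1
    have : (K.sphere a).verts = ∅ :=
      sphere_neg_one_verts (hunit a ha) (by omega)
    have hb : b ∈ (K.sphere a).verts := by
      simp only [sphere, induce, Finset.mem_filter]
      exact ⟨(K.supp hab).2, hab⟩
    rw [this] at hb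
    exact absurd hb (Finset.notMem_empty b)

lemma zero_sphere_verts {d : ℤ} {K : FSGraph V} (h : IsSphere d K) (hd : d = 0) :
    ∃ u v, u ≠ v ∧ K.verts = {u, v} := by
  have hna := zero_sphere_no_adj h hd
  cases h with
  | empty G h => omega
  | succ d G hd' hne hunit hpunct =>
    obtain ⟨x, hx, hc⟩ := hpunct
    have hna' : ∀ a b, ¬ (K.remove x).Adj a b := by
      intro a b hab
      exact hna a b hab.1
    obtain ⟨y, hy⟩ := contractible_no_adj_single hc hna'
    refine ⟨x, y, ?_, ?_⟩
    · have : y ∈ (K.remove x).verts := by rw [hy]; exact Finset.mem_singleton_self y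
      simp only [remove, induce, Finset.mem_filter] at this
      exact fun h' => this.2 h'.symm
    · ext z
      simp only [Finset.mem_insert, Finset.mem_singleton]
      constructor
      · intro hz
        by_cases hzx : z = x
        · exact Or.inl hzx
        · right
          have : z ∈ (K.remove x).verts := by
            simp only [remove, induce, Finset.mem_filter]
            exact ⟨hz, hzx⟩
          rw [hy, Finset.mem_singleton] at this
          exact this
      · rintro (rfl | hzy)
        · exact hx
        · subst z
          have : y ∈ (K.remove x).verts := by rw [hy]; exact Finset.mem_singleton_self y
          simp only [remove, induce, Finset.mem_filter] at this
          exact this.1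

lemma zero_sphere_card {d : ℤ} {K : FSGraph V} (h : IsSphere d K) (hd : d = 0) :
    K.verts.card = 2 := by
  obtain ⟨u, v, huv, hverts⟩ := zero_sphere_verts h hd
  rw [hverts, Finset.card_insert_of_notMem (by simp [huv]), Finset.card_singleton]

section TwoGraph
variable {H : FSGraph V}

lemma sphere_one_of_two_graph (hH : IsDGraph 2 H) {x : V} (hx : x ∈ H.verts) : IsSphere 1 (H.sphere x) := by
  have := hH.2 x hx
  have h21 : (2:ℤ) - 1 = 1 := by norm_num
  rwa [h21] at this

lemma sphere_sphere_zero (hH : IsDGraph 2 H) {x y : V} (hxy : H.Adj x y) :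
    IsSphere 0 ((H.sphere x).sphere y) ∧
    ((H.sphere x).sphere y).verts = H.verts.filter (fun z => H.Adj x z ∧ H.Adj y z) := by
  have hx := (H.supp hxy).1
  have hy' : y ∈ (H.sphere x).verts := by
    simp only [sphere, induce, Finset.mem_filter]
    exact ⟨(H.supp hxy).2, hxy⟩
  have h1 : IsSphere 1 (H.sphere x) := sphere_one_of_two_graph hH hx
  have h0 : IsSphere 0 ((H.sphere x).sphere y) := by
    cases h1 with
    | succ d G hd' hne hunit hpunct =>
      have := hunit y hy'
      have h10 : (1:ℤ) - 1 = 0 := by norm_num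
      rwa [h10] at this
  refine ⟨h0, ?_⟩
  ext z
  simp only [sphere, induce, Finset.mem_filter]
  erw [@Finset.mem_filter _ _ (fun _ => Classical.propDecidable _), @Finset.mem_filter _ _ (fun _ => Classical.propDecidable _)]
  constructor
  · intro ⟨⟨hz1, hz2⟩, hz3, hz4, hz5⟩
    exact ⟨hz1, hz2, hz3⟩
  · intro ⟨hz1, hz2, hz3⟩
    exact ⟨⟨hz1, hz2⟩, hz3, hxy, hz2⟩

lemma common_nbrs_card (hH : IsDGraph 2 H) {x y : V} (hxy : H.Adj x y) :
    (H.verts.filter (fun z => H.Adj x z ∧ H.Adj y z)).card = 2 := by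
  obtain ⟨h0, hverts⟩ := sphere_sphere_zero hH hxy
  rw [← hverts]
  exact zero_sphere_card h0 rfl

lemma two_graph_simplex_card_le (hH : IsDGraph 2 H) {s : Finset V} (hs : s ∈ H.simplices) : s.card ≤ 3 := by
  by_contra hcard
  push_neg at hcard
  have hsimp := mem_simplices.mp hs
  obtain ⟨x, hx⟩ := Finset.card_pos.mp (by omega : 0 < s.card)
  have h1 : 0 < (s.erase x).card := by
    rw [Finset.card_erase_of_mem hx]; omega
  obtain ⟨y, hy⟩ := Finset.card_pos.mp h1
  have h2 : 1 < ((s.erase x).erase y).card := by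
    rw [Finset.card_erase_of_mem hy, Finset.card_erase_of_mem hx]; omega
  obtain ⟨z, hz, w, hw, hzw⟩ := Finset.one_lt_card.mp h2
  have hzs : z ∈ s := Finset.mem_of_mem_erase (Finset.mem_of_mem_erase hz)
  have hws : w ∈ s := Finset.mem_of_mem_erase (Finset.mem_of_mem_erase hw)
  have hys : y ∈ s := Finset.mem_of_mem_erase hy
  have hzx : z ≠ x := Finset.ne_of_mem_erase (Finset.mem_of_mem_erase hz)
  have hwx : w ≠ x := Finset.ne_of_mem_erase (Finset.mem_of_mem_erase hw)
  have hzy : z ≠ y := Finset.ne_of_mem_erase hz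
  have hwy : w ≠ y := Finset.ne_of_mem_erase hw
  have hyx : y ≠ x := Finset.ne_of_mem_erase hy
  have hxy : H.Adj x y := hsimp.2.2 x hx y hys (Ne.symm hyx)
  obtain ⟨h0, -⟩ := sphere_sphere_zero hH hxy
  apply zero_sphere_no_adj h0 rfl z w
  refine ⟨⟨hsimp.2.2 z hzs w hws hzw, ?_, ?_⟩, ?_, ?_⟩
  · exact hsimp.2.2 x hx z hzs (Ne.symm hzx)
  · exact hsimp.2.2 x hx w hws (Ne.symm hwx)
  · exact ⟨hsimp.2.2 y hys z hzs (Ne.symm hzy), hxy,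
      hsimp.2.2 x hx z hzs (Ne.symm hzx)⟩
  · exact ⟨hsimp.2.2 y hys w hws (Ne.symm hwy), hxy,
      hsimp.2.2 x hx w hws (Ne.symm hwx)⟩

end TwoGraph
set_option maxHeartbeats 1000000 in
lemma two_graph_split {H : FSGraph V} (hH : IsDGraph 2 H) (f : V → ℝ) (c : ℝ)
    (hc : ∀ v ∈ H.verts, f v ≠ c)
    (hlo : Contractible (H.induce (fun y => f y < c)))
    (hhi : Contractible (H.induce (fun y => c < f y))) :
    H.euler = 2 := by
  classical
  set g : Finset V → ℤ := fun s => (-1:ℤ)^(s.card - 1) with hg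
  set Mx : Finset (Finset V) :=
    H.simplices.filter (fun s => (∃ a ∈ s, f a < c) ∧ (∃ b ∈ s, c < f b)) with hMx
  -- basic facts about members of Mx
  have hMxsimp : ∀ s ∈ Mx, s ∈ H.simplices := fun s hs => (Finset.mem_filter.mp hs).1
  have hMxcard : ∀ s ∈ Mx, 2 ≤ s.card ∧ s.card ≤ 3 := by
    intro s hs
    obtain ⟨hs1, ⟨a, ha, hfa⟩, ⟨b, hb, hfb⟩⟩ := Finset.mem_filter.mp hs
    constructor
    · apply Finset.one_lt_card.mpr
      exact ⟨a, ha, b, hb, fun h => absurd (h ▸ hfa) (not_lt.mpr (le_of_lt hfb))⟩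
    · exact two_graph_simplex_card_le hH hs1
  -- split the Euler sum
  have hA : H.simplices.filter (fun s => ∀ v ∈ s, f v < c) = (H.induce (fun y => f y < c)).simplices := by
    rw [simplices_induce]
  have hB : (H.simplices.filter (fun s => ¬ ∀ v ∈ s, f v < c)).filter (fun s => ∀ v ∈ s, c < f v)
      = (H.induce (fun y => c < f y)).simplices := by
    rw [simplices_induce]
    ext s
    simp only [Finset.mem_filter, and_assoc]
    constructor
    · rintro ⟨h1, -, h3⟩; exact ⟨h1, h3⟩
    · rintro ⟨h1, h3⟩
      obtain ⟨v, hv⟩ := (mem_simplices.mp h1).1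
      exact ⟨h1, fun hall => absurd (hall v hv) (not_lt.mpr (le_of_lt (h3 v hv))), h3⟩
  have hC : (H.simplices.filter (fun s => ¬ ∀ v ∈ s, f v < c)).filter (fun s => ¬ ∀ v ∈ s, c < f v)
      = Mx := by
    ext s
    simp only [hMx, Finset.mem_filter, and_assoc]
    constructor
    · rintro ⟨h1, h2, h3⟩
      push_neg at h2 h3
      obtain ⟨u, hu, hu2⟩ := h2
      obtain ⟨w, hw, hw2⟩ := h3
      have huv : u ∈ H.verts := (mem_simplices.mp h1).2.1 hu
      have hwv : w ∈ H.verts := (mem_simplices.mp h1).2.1 hw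
      refine ⟨h1, ⟨w, hw, lt_of_le_of_ne hw2 (hc w hwv)⟩,
        ⟨u, hu, lt_of_le_of_ne hu2 (Ne.symm (hc u huv))⟩⟩
    · rintro ⟨h1, ⟨a, ha, hfa⟩, ⟨b, hb, hfb⟩⟩
      refine ⟨h1, ?_, ?_⟩
      · intro hall; exact absurd (hall b hb) (not_lt.mpr (le_of_lt hfb))
      · intro hall; exact absurd (hall a ha) (not_lt.mpr (le_of_lt hfa))
  have hsplit : H.euler = (H.induce (fun y => f y < c)).euler
      + (H.induce (fun y => c < f y)).euler + ∑ s ∈ Mx, g s := by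
    have e1 := Finset.sum_filter_add_sum_filter_not H.simplices (fun s => ∀ v ∈ s, f v < c) g
    have e2 := Finset.sum_filter_add_sum_filter_not
      (H.simplices.filter (fun s => ¬ ∀ v ∈ s, f v < c)) (fun s => ∀ v ∈ s, c < f v) g
    rw [hA] at e1
    rw [hB, hC] at e2
    have : H.euler = ∑ s ∈ H.simplices, g s := rfl
    rw [this, ← e1, ← e2]
    have hlo' : (H.induce (fun y => f y < c)).euler
        = ∑ s ∈ (H.induce (fun y => f y < c)).simplices, g s := rfl
    have hhi' : (H.induce (fun y => c < f y)).euler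
        = ∑ s ∈ (H.induce (fun y => c < f y)).simplices, g s := rfl
    rw [hlo', hhi']
    ring
  -- edges and triangles
  set E2 : Finset (Finset V) := Mx.filter (fun s => s.card = 2) with hE2
  set T3 : Finset (Finset V) := Mx.filter (fun s => s.card ≠ 2) with hT3
  have hT3card : ∀ t ∈ T3, t.card = 3 := by
    intro t ht
    obtain ⟨htM, htne⟩ := Finset.mem_filter.mp ht
    have := hMxcard t htM
    omega
  have hMsum : ∑ s ∈ Mx, g s = (T3.card : ℤ) - (E2.card : ℤ) := by
    rw [← Finset.sum_filter_add_sum_filter_not Mx (fun s => s.card = 2) g, ← hE2, ← hT3]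
    have hE2sum : ∑ s ∈ E2, g s = - (E2.card : ℤ) := by
      rw [Finset.sum_congr rfl (fun s hs => by
        rw [hg]
        simp only []
        rw [(Finset.mem_filter.mp hs).2]
        norm_num : ∀ s ∈ E2, g s = (-1:ℤ))]
      rw [Finset.sum_const, nsmul_eq_mul]
      ring
    have hT3sum : ∑ s ∈ T3, g s = (T3.card : ℤ) := by
      rw [Finset.sum_congr rfl (fun s hs => by
        rw [hg]
        simp only []
        rw [hT3card s hs]
        norm_num : ∀ s ∈ T3, g s = (1:ℤ))]
      rw [Finset.sum_const, nsmul_eq_mul]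
      ring
    rw [hE2sum, hT3sum]
    ring
  -- normal form for mixed edges
  have edge_norm : ∀ e ∈ E2, ∃ x y, e = {x, y} ∧ f x < c ∧ c < f y ∧ H.Adj x y := by
    intro e he
    obtain ⟨heM, hecard⟩ := Finset.mem_filter.mp he
    obtain ⟨hesimp, ⟨a, ha, hfa⟩, ⟨b, hb, hfb⟩⟩ := Finset.mem_filter.mp heM
    obtain ⟨u, v, huv, rfl⟩ := Finset.card_eq_two.mp hecard
    have hsimp := mem_simplices.mp hesimp
    have hAdj : H.Adj u v := hsimp.2.2 u (by simp) v (by simp) huv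
    simp only [Finset.mem_insert, Finset.mem_singleton] at ha hb
    by_cases hu : f u < c
    · have hbv : b = v := by
        rcases hb with rfl | rfl
        · exact absurd hfb (not_lt.mpr (le_of_lt hu))
        · rfl
      exact ⟨u, v, rfl, hu, hbv ▸ hfb, hAdj⟩
    · have hav : a = v := by
        rcases ha with rfl | rfl
        · exact absurd hfa hu
        · rfl
      have hbu : b = u := by
        rcases hb with rfl | rfl
        · rfl
        · exact absurd (hav ▸ hfa) (not_lt.mpr (le_of_lt hfb))
      refine ⟨v, u, Finset.pair_comm u v, hav ▸ hfa, hbu ▸ hfb, H.symm hAdj⟩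
  -- each mixed edge lies in exactly two mixed triangles
  have hperE : ∀ e ∈ E2, (T3.filter (fun t => e ⊆ t)).card = 2 := by
    intro e he
    obtain ⟨x, y, rfl, hfx, hfy, hAdj⟩ := edge_norm e he
    have hxy : x ≠ y := fun h => absurd (h ▸ hfx) (not_lt.mpr (le_of_lt hfy))
    have hxv : x ∈ H.verts := (H.supp hAdj).1
    have hyv : y ∈ H.verts := (H.supp hAdj).2
    have hximg : ∀ z, H.Adj x z ∧ H.Adj y z → z ∉ ({x, y} : Finset V) := by
      rintro z ⟨hz1, hz2⟩ hzin
      simp only [Finset.mem_insert, Finset.mem_singleton] at hzin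
      rcases hzin with rfl | rfl
      · exact H.loopless z hz1
      · exact H.loopless z hz2
    have himg : T3.filter (fun t => ({x, y} : Finset V) ⊆ t)
        = (H.verts.filter (fun z => H.Adj x z ∧ H.Adj y z)).image
            (fun z => insert z ({x, y} : Finset V)) := by
      ext t
      simp only [Finset.mem_filter, Finset.mem_image]
      constructor
      · rintro ⟨ht, het⟩
        have htc3 := hT3card t ht
        have htM := (Finset.mem_filter.mp ht).1
        have htsimp := mem_simplices.mp (hMxsimp t htM)
        have hcard2 : ({x, y} : Finset V).card = 2 := by
          rw [Finset.card_insert_of_notMem (by simp [hxy]), Finset.card_singleton]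
        have hsd : (t \ ({x, y} : Finset V)).card = 1 := by
          rw [Finset.card_sdiff_of_subset het, htc3, hcard2]
        obtain ⟨z, hz⟩ := Finset.card_eq_one.mp hsd
        have hzt : z ∈ t ∧ z ∉ ({x, y} : Finset V) := by
          have : z ∈ t \ ({x, y} : Finset V) := by rw [hz]; exact Finset.mem_singleton_self z
          exact Finset.mem_sdiff.mp this
        have hzx : z ≠ x := fun h => hzt.2 (by simp [h])
        have hzy : z ≠ y := fun h => hzt.2 (by simp [h])
        refine ⟨z, ?_, ?_⟩
        · refine ⟨htsimp.2.1 hzt.1, ?_, ?_⟩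
          · exact htsimp.2.2 x (het (by simp)) z hzt.1 (Ne.symm hzx)
          · exact htsimp.2.2 y (het (by simp)) z hzt.1 (Ne.symm hzy)
        · ext w
          simp only [Finset.mem_insert, Finset.mem_singleton]
          constructor
          · rintro (rfl | rfl | rfl)
            · exact hzt.1
            · exact het (by simp)
            · exact het (by simp)
          · intro hw
            by_cases hwxy : w ∈ ({x, y} : Finset V)
            · simp only [Finset.mem_insert, Finset.mem_singleton] at hwxy
              tauto
            · have : w ∈ t \ ({x, y} : Finset V) := Finset.mem_sdiff.mpr ⟨hw, hwxy⟩
              rw [hz, Finset.mem_singleton] at this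
              tauto
      · rintro ⟨z, hz, rfl⟩
        obtain ⟨hzv, hz1, hz2⟩ := hz
        have hznot : z ∉ ({x, y} : Finset V) := hximg z ⟨hz1, hz2⟩
        have hzx : z ≠ x := fun h => hznot (by simp [h])
        have hzy : z ≠ y := fun h => hznot (by simp [h])
        have hcard3 : (insert z ({x, y} : Finset V)).card = 3 := by
          rw [Finset.card_insert_of_notMem hznot,
            Finset.card_insert_of_notMem (by simp [hxy]), Finset.card_singleton]
        have hsimp : (insert z ({x, y} : Finset V)) ∈ H.simplices := by
          apply mem_simplices.mpr
          refine ⟨⟨z, Finset.mem_insert_self _ _⟩, ?_, ?_⟩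
          · intro w hw
            simp only [Finset.mem_insert, Finset.mem_singleton] at hw
            rcases hw with rfl | rfl | rfl
            · exact hzv
            · exact hxv
            · exact hyv
          · intro a1 ha1 b1 hb1 hab
            simp only [Finset.mem_insert, Finset.mem_singleton] at ha1 hb1
            rcases ha1 with rfl | rfl | rfl <;> rcases hb1 with rfl | rfl | rfl
            · exact absurd rfl hab
            · exact H.symm hz1
            · exact H.symm hz2
            · exact hz1
            · exact absurd rfl hab
            · exact hAdj
            · exact hz2
            · exact H.symm hAdj
            · exact absurd rfl hab
        refine ⟨Finset.mem_filter.mpr ⟨Finset.mem_filter.mpr ⟨hsimp, ?_, ?_⟩, by omega⟩,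
          Finset.subset_insert _ _⟩
        · exact ⟨x, by simp, hfx⟩
        · exact ⟨y, by simp, hfy⟩
    rw [himg]
    rw [Finset.card_image_of_injOn, common_nbrs_card hH hAdj]
    intro z1 h1 z2 h2 heq
    simp only [Finset.coe_filter, Set.mem_setOf_eq] at h1 h2
    have hz1n := hximg z1 h1.2
    have heq' : insert z1 ({x, y} : Finset V) = insert z2 ({x, y} : Finset V) := heq
    have : z1 ∈ insert z2 ({x, y} : Finset V) := heq' ▸ Finset.mem_insert_self z1 _
    rcases Finset.mem_insert.mp this with h | h
    · exact h
    · exact absurd h hz1n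
  -- each mixed triangle contains exactly two mixed edges
  have hperT : ∀ t ∈ T3, (E2.filter (fun e => e ⊆ t)).card = 2 := by
    intro t ht
    have htc3 := hT3card t ht
    have htM := (Finset.mem_filter.mp ht).1
    obtain ⟨htsimp', hmix⟩ := Finset.mem_filter.mp htM
    have htsimp := mem_simplices.mp htsimp'
    set L := t.filter (fun v => f v < c) with hL
    set U := t.filter (fun v => c < f v) with hU
    have hUneg : U = t.filter (fun v => ¬ f v < c) := by
      ext v
      simp only [hU, Finset.mem_filter, and_congr_right_iff]
      intro hv
      have hne := hc v (htsimp.2.1 hv)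
      constructor
      · intro h; exact not_lt.mpr (le_of_lt h)
      · intro h; exact lt_of_le_of_ne (le_of_not_gt h) (Ne.symm hne)
    have hLU : L.card + U.card = 3 := by
      rw [hUneg, hL, Finset.card_filter_add_card_filter_not, htc3]
    have hLpos : 0 < L.card := by
      obtain ⟨⟨a, ha, hfa⟩, -⟩ := hmix
      exact Finset.card_pos.mpr ⟨a, Finset.mem_filter.mpr ⟨ha, hfa⟩⟩
    have hUpos : 0 < U.card := by
      obtain ⟨-, ⟨b, hb, hfb⟩⟩ := hmix
      exact Finset.card_pos.mpr ⟨b, Finset.mem_filter.mpr ⟨hb, hfb⟩⟩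
    have himg : E2.filter (fun e => e ⊆ t)
        = (L ×ˢ U).image (fun q : V × V => ({q.1, q.2} : Finset V)) := by
      ext e
      simp only [Finset.mem_filter, Finset.mem_image, Finset.mem_product]
      constructor
      · rintro ⟨he, het⟩
        obtain ⟨x, y, rfl, hfx, hfy, hAdj⟩ := edge_norm e he
        refine ⟨(x, y), ⟨?_, ?_⟩, rfl⟩
        · exact Finset.mem_filter.mpr ⟨het (by simp), hfx⟩
        · exact Finset.mem_filter.mpr ⟨het (by simp), hfy⟩
      · rintro ⟨⟨l, u⟩, ⟨hl, hu⟩, rfl⟩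
        obtain ⟨hlt, hfl⟩ := Finset.mem_filter.mp hl
        obtain ⟨hut, hfu⟩ := Finset.mem_filter.mp hu
        have hlu : l ≠ u := fun h => absurd (h ▸ hfl) (not_lt.mpr (le_of_lt hfu))
        have hcard2 : ({l, u} : Finset V).card = 2 := by
          rw [Finset.card_insert_of_notMem (by simp [hlu]), Finset.card_singleton]
        have hsub : ({l, u} : Finset V) ⊆ t := by
          intro w hw
          simp only [Finset.mem_insert, Finset.mem_singleton] at hw
          rcases hw with rfl | rfl
          · exact hlt
          · exact hut
        refine ⟨Finset.mem_filter.mpr ⟨Finset.mem_filter.mpr ⟨?_, ?_, ?_⟩, hcard2⟩, hsub⟩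
        · apply mem_simplices.mpr
          refine ⟨⟨l, by simp⟩, fun w hw => htsimp.2.1 (hsub hw), ?_⟩
          intro a1 ha1 b1 hb1 hab
          simp only [Finset.mem_insert, Finset.mem_singleton] at ha1 hb1
          rcases ha1 with rfl | rfl <;> rcases hb1 with rfl | rfl
          · exact absurd rfl hab
          · exact htsimp.2.2 a1 hlt b1 hut hab
          · exact htsimp.2.2 a1 hut b1 hlt hab
          · exact absurd rfl hab
        · exact ⟨l, by simp, hfl⟩
        · exact ⟨u, by simp, hfu⟩
    rw [himg, Finset.card_image_of_injOn, Finset.card_product]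
    · have : L.card = 1 ∧ U.card = 2 ∨ L.card = 2 ∧ U.card = 1 := by omega
      rcases this with ⟨h1, h2⟩ | ⟨h1, h2⟩ <;> rw [h1, h2]
    · rintro ⟨l, u⟩ h1 ⟨l', u'⟩ h2 heq
      simp only [Finset.coe_product, Set.mem_prod, Finset.mem_coe] at h1 h2
      obtain ⟨hl, hu⟩ := h1
      obtain ⟨hl', hu'⟩ := h2
      rw [hL] at hl hl'
      rw [hU] at hu hu'
      have hfl := (Finset.mem_filter.mp hl).2
      have hfu := (Finset.mem_filter.mp hu).2
      have hfl' := (Finset.mem_filter.mp hl').2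
      have hfu' := (Finset.mem_filter.mp hu').2
      simp only [Prod.mk.injEq]
      have heq' : ({l, u} : Finset V) = ({l', u'} : Finset V) := heq
      have hll : l = l' := by
        have : l ∈ ({l', u'} : Finset V) := heq' ▸ Finset.mem_insert_self l _
        simp only [Finset.mem_insert, Finset.mem_singleton] at this
        rcases this with h | h
        · exact h
        · exact absurd (h ▸ hfl) (not_lt.mpr (le_of_lt hfu'))
      have huu : u = u' := by
        have : u ∈ ({l', u'} : Finset V) := heq' ▸ (by simp : u ∈ ({l, u} : Finset V))
        simp only [Finset.mem_insert, Finset.mem_singleton] at this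
        rcases this with h | h
        · exact absurd (h ▸ hfu) (not_lt.mpr (le_of_lt hfl'))
        · exact h
      exact ⟨hll, huu⟩
  -- double counting
  have hdc : E2.card = T3.card := by
    have h1 : ∑ e ∈ E2, (T3.filter (fun t => e ⊆ t)).card
        = ∑ t ∈ T3, (E2.filter (fun e => e ⊆ t)).card := by
      simp only [Finset.card_filter]
      exact Finset.sum_comm
    rw [Finset.sum_congr rfl hperE, Finset.sum_congr rfl hperT,
      Finset.sum_const, Finset.sum_const, smul_eq_mul, smul_eq_mul] at h1
    omega
  rw [hsplit, contractible_euler hlo, contractible_euler hhi, hMsum, hdc]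
  ring
section ConeSub
variable (H : FSGraph V) (p : V)

lemma subSphere_cone_apex (hp : p ∉ H.verts) (f : V → ℝ) :
    (H.cone p hp).subSphere f p = H.induce (fun y => f y < f p) := by
  rw [subSphere_eq_induce]
  apply graph_ext
  · ext y
    simp only [induce, Finset.mem_filter]
    constructor
    · rintro ⟨h1, h2, h3⟩
      exact ⟨(cone_adj_apex H p hp).mp h2, h3⟩
    · rintro ⟨h1, h2⟩
      exact ⟨Finset.mem_insert_of_mem h1, (cone_adj_apex H p hp).mpr h1, h2⟩
  · intro a b
    simp only [induce]
    constructor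
    · rintro ⟨h1, ⟨h2, h3⟩, h4, h5⟩
      have ha := (cone_adj_apex H p hp).mp h2
      have hb := (cone_adj_apex H p hp).mp h4
      exact ⟨(cone_adj_of_ne H p hp (ne_p_of_mem H p hp ha) (ne_p_of_mem H p hp hb)).mp h1,
        ⟨h3, h5⟩⟩
    · rintro ⟨h1, h2, h3⟩
      have ha := (H.supp h1).1
      have hb := (H.supp h1).2
      exact ⟨(cone_adj_of_ne H p hp (ne_p_of_mem H p hp ha) (ne_p_of_mem H p hp hb)).mpr h1,
        ⟨(cone_adj_apex H p hp).mpr ha, h2⟩, ⟨(cone_adj_apex H p hp).mpr hb, h3⟩⟩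

lemma supSphere_cone_apex (hp : p ∉ H.verts) (f : V → ℝ) :
    (H.cone p hp).supSphere f p = H.induce (fun y => f p < f y) := by
  rw [supSphere_eq_induce]
  apply graph_ext
  · ext y
    simp only [induce, Finset.mem_filter]
    constructor
    · rintro ⟨h1, h2, h3⟩
      exact ⟨(cone_adj_apex H p hp).mp h2, h3⟩
    · rintro ⟨h1, h2⟩
      exact ⟨Finset.mem_insert_of_mem h1, (cone_adj_apex H p hp).mpr h1, h2⟩
  · intro a b
    simp only [induce]
    constructor
    · rintro ⟨h1, ⟨h2, h3⟩, h4, h5⟩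
      have ha := (cone_adj_apex H p hp).mp h2
      have hb := (cone_adj_apex H p hp).mp h4
      exact ⟨(cone_adj_of_ne H p hp (ne_p_of_mem H p hp ha) (ne_p_of_mem H p hp hb)).mp h1,
        ⟨h3, h5⟩⟩
    · rintro ⟨h1, h2, h3⟩
      have ha := (H.supp h1).1
      have hb := (H.supp h1).2
      exact ⟨(cone_adj_of_ne H p hp (ne_p_of_mem H p hp ha) (ne_p_of_mem H p hp hb)).mpr h1,
        ⟨(cone_adj_apex H p hp).mpr ha, h2⟩, ⟨(cone_adj_apex H p hp).mpr hb, h3⟩⟩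

lemma subSphere_cone_eq (hp : p ∉ H.verts) (f : V → ℝ) {x : V} (hx : x ∈ H.verts)
    (hno : ¬ f p < f x) :
    (H.cone p hp).subSphere f x = H.subSphere f x := by
  have hxp : x ≠ p := ne_p_of_mem H p hp hx
  rw [subSphere_eq_induce, subSphere_eq_induce]
  apply graph_ext
  · ext y
    simp only [induce, Finset.mem_filter]
    constructor
    · rintro ⟨h1, h2, h3⟩
      have hyp : y ≠ p := fun h => hno (h ▸ h3)
      rcases Finset.mem_insert.mp h1 with rfl | h1
      · exact absurd rfl hyp
      · exact ⟨h1, (cone_adj_of_ne H p hp hxp hyp).mp h2, h3⟩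
    · rintro ⟨h1, h2, h3⟩
      exact ⟨Finset.mem_insert_of_mem h1,
        (cone_adj_of_ne H p hp hxp (ne_p_of_mem H p hp h1)).mpr h2, h3⟩
  · intro a b
    simp only [induce]
    constructor
    · rintro ⟨h1, ⟨h2, h3⟩, h4, h5⟩
      have hap : a ≠ p := fun h => hno (h ▸ h3)
      have hbp : b ≠ p := fun h => hno (h ▸ h5)
      exact ⟨(cone_adj_of_ne H p hp hap hbp).mp h1,
        ⟨(cone_adj_of_ne H p hp hxp hap).mp h2, h3⟩,
        ⟨(cone_adj_of_ne H p hp hxp hbp).mp h4, h5⟩⟩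
    · rintro ⟨h1, ⟨h2, h3⟩, h4, h5⟩
      have hap : a ≠ p := ne_p_of_mem H p hp (H.supp h1).1
      have hbp : b ≠ p := ne_p_of_mem H p hp (H.supp h1).2
      exact ⟨(cone_adj_of_ne H p hp hap hbp).mpr h1,
        ⟨(cone_adj_of_ne H p hp hxp hap).mpr h2, h3⟩,
        ⟨(cone_adj_of_ne H p hp hxp hbp).mpr h4, h5⟩⟩

lemma supSphere_cone_eq (hp : p ∉ H.verts) (f : V → ℝ) {x : V} (hx : x ∈ H.verts)
    (hno : ¬ f x < f p) :
    (H.cone p hp).supSphere f x = H.supSphere f x := by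
  have hxp : x ≠ p := ne_p_of_mem H p hp hx
  rw [supSphere_eq_induce, supSphere_eq_induce]
  apply graph_ext
  · ext y
    simp only [induce, Finset.mem_filter]
    constructor
    · rintro ⟨h1, h2, h3⟩
      have hyp : y ≠ p := fun h => hno (h ▸ h3)
      rcases Finset.mem_insert.mp h1 with rfl | h1
      · exact absurd rfl hyp
      · exact ⟨h1, (cone_adj_of_ne H p hp hxp hyp).mp h2, h3⟩
    · rintro ⟨h1, h2, h3⟩
      exact ⟨Finset.mem_insert_of_mem h1,
        (cone_adj_of_ne H p hp hxp (ne_p_of_mem H p hp h1)).mpr h2, h3⟩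
  · intro a b
    simp only [induce]
    constructor
    · rintro ⟨h1, ⟨h2, h3⟩, h4, h5⟩
      have hap : a ≠ p := fun h => hno (h ▸ h3)
      have hbp : b ≠ p := fun h => hno (h ▸ h5)
      exact ⟨(cone_adj_of_ne H p hp hap hbp).mp h1,
        ⟨(cone_adj_of_ne H p hp hxp hap).mp h2, h3⟩,
        ⟨(cone_adj_of_ne H p hp hxp hbp).mp h4, h5⟩⟩
    · rintro ⟨h1, ⟨h2, h3⟩, h4, h5⟩
      have hap : a ≠ p := ne_p_of_mem H p hp (H.supp h1).1
      have hbp : b ≠ p := ne_p_of_mem H p hp (H.supp h1).2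
      exact ⟨(cone_adj_of_ne H p hp hap hbp).mpr h1,
        ⟨(cone_adj_of_ne H p hp hxp hap).mpr h2, h3⟩,
        ⟨(cone_adj_of_ne H p hp hxp hbp).mpr h4, h5⟩⟩

end ConeSub

end FSGraph
set_option maxHeartbeats 1000000 in
/-- Let `H` be a `2`-graph with `χ(H) = 0` (e.g. a discrete `2`-torus) and let
`G = H ⊕ K₁` be the cone over `H` with apex `p`.  Then `G` is contractible,
`χ(G) = 1`, `G` is not a `3`-graph, and every locally injective function on the
vertices of `G` has more than two critical points. -/
theorem cone_over_torus {V : Type} (H : FSGraph V) (p : V) (hp : p ∉ H.verts)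
    (hH : FSGraph.IsDGraph 2 H) (hchi : H.euler = 0) :
    FSGraph.Contractible (FSGraph.cone H p hp) ∧
      (FSGraph.cone H p hp).euler = 1 ∧
      ¬ FSGraph.IsDGraph 3 (FSGraph.cone H p hp) ∧
      ∀ f : V → ℝ, (FSGraph.cone H p hp).LocallyInjective f →
        2 < ((FSGraph.cone H p hp).verts.filter
          (fun x => (FSGraph.cone H p hp).IsCritical f x)).card := by
  classical
  set G := FSGraph.cone H p hp with hG
  have hpG : p ∈ G.verts := Finset.mem_insert_self p H.verts
  refine ⟨FSGraph.cone_contractible H p hp, FSGraph.euler_cone H p hp, ?_, ?_⟩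
  · rintro ⟨hne, hunit⟩
    have h2 := hunit p hpG
    rw [show (3:ℤ) - 1 = 2 from by norm_num] at h2
    rw [show G.sphere p = H from FSGraph.sphere_cone_apex H p hp] at h2
    have h3 := FSGraph.sphere_euler h2
    rw [hchi] at h3
    norm_num [Int.even_iff] at h3
  · intro f hf
    by_contra hle
    push_neg at hle
    have hHne : H.verts.Nonempty := hH.1
    have hGne : G.verts.Nonempty := ⟨p, hpG⟩
    obtain ⟨a, haG, hamin⟩ := Finset.exists_min_image G.verts f hGne
    obtain ⟨b, hbG, hbmax⟩ := Finset.exists_max_image G.verts f hGne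
    obtain ⟨h0, hh0⟩ := hHne
    have hph0 : G.Adj p h0 := (FSGraph.cone_adj_apex H p hp).mpr hh0
    have hh0G : h0 ∈ G.verts := Finset.mem_insert_of_mem hh0
    have hfab : f a < f b := by
      rcases lt_or_ge (f p) (f h0) with h | h
      · exact lt_of_le_of_lt (hamin p hpG) (lt_of_lt_of_le h (hbmax h0 hh0G))
      · have hne := hf p h0 hph0
        have h' : f h0 < f p := lt_of_le_of_ne h (fun e => hne e.symm)
        exact lt_of_le_of_lt (hamin h0 hh0G) (lt_of_lt_of_le h' (hbmax p hpG))
    have hab : a ≠ b := fun h => absurd (h ▸ hfab) (lt_irrefl _)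
    have hmincrit : ∀ x ∈ G.verts, (∀ y ∈ G.verts, f x ≤ f y) → G.IsCritical f x := by
      intro x hx hmin
      left
      apply FSGraph.not_contractible_empty
      ext y
      simp only [FSGraph.subSphere, FSGraph.sphere, FSGraph.induce, Finset.mem_filter,
        Finset.notMem_empty, iff_false]
      rintro ⟨⟨hy1, -⟩, hy3⟩
      exact absurd hy3 (not_lt.mpr (hmin y hy1))
    have hmaxcrit : ∀ x ∈ G.verts, (∀ y ∈ G.verts, f y ≤ f x) → G.IsCritical f x := by
      intro x hx hmax
      right
      apply FSGraph.not_contractible_empty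
      ext y
      simp only [FSGraph.supSphere, FSGraph.sphere, FSGraph.induce, Finset.mem_filter,
        Finset.notMem_empty, iff_false]
      rintro ⟨⟨hy1, -⟩, hy3⟩
      exact absurd hy3 (not_lt.mpr (hmax y hy1))
    have haC : G.IsCritical f a := hmincrit a haG hamin
    have hbC : G.IsCritical f b := hmaxcrit b hbG hbmax
    set C := G.verts.filter (fun x => G.IsCritical f x) with hC
    have habs : ({a, b} : Finset V) ⊆ C := by
      intro x hx
      simp only [Finset.mem_insert, Finset.mem_singleton] at hx
      rcases hx with rfl | rfl
      · exact Finset.mem_filter.mpr ⟨haG, haC⟩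
      · exact Finset.mem_filter.mpr ⟨hbG, hbC⟩
    have hCeq : C = {a, b} := by
      symm
      apply Finset.eq_of_subset_of_card_le habs
      rw [Finset.card_insert_of_notMem (by simp [hab]), Finset.card_singleton]
      exact hle
    have hcritmem : ∀ x, x ∈ G.verts → G.IsCritical f x → (x = a ∨ x = b) := by
      intro x hx hcrit
      have : x ∈ C := Finset.mem_filter.mpr ⟨hx, hcrit⟩
      rw [hCeq] at this
      simpa using this
    have hnotcrit : ∀ x ∈ G.verts, x ≠ a → x ≠ b →
        FSGraph.Contractible (G.subSphere f x) ∧ FSGraph.Contractible (G.supSphere f x) := by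
      intro x hx hxa hxb
      by_contra hcon
      have hcrit : G.IsCritical f x := by
        unfold FSGraph.IsCritical
        tauto
      rcases hcritmem x hx hcrit with rfl | rfl
      · exact hxa rfl
      · exact hxb rfl
    have hminu : ∀ x ∈ G.verts, x ≠ a → f a < f x := by
      intro x hx hxa
      rcases lt_or_ge (f a) (f x) with h | h
      · exact h
      · exfalso
        have hxmin : ∀ y ∈ G.verts, f x ≤ f y := fun y hy => le_trans h (hamin y hy)
        rcases hcritmem x hx (hmincrit x hx hxmin) with rfl | rfl
        · exact hxa rfl
        · exact absurd h (not_le.mpr hfab)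
    have hmaxu : ∀ x ∈ G.verts, x ≠ b → f x < f b := by
      intro x hx hxb
      rcases lt_or_ge (f x) (f b) with h | h
      · exact h
      · exfalso
        have hxmax : ∀ y ∈ G.verts, f y ≤ f x := fun y hy => le_trans (hbmax y hy) h
        rcases hcritmem x hx (hmaxcrit x hx hxmax) with rfl | rfl
        · exact absurd h (not_le.mpr hfab)
        · exact hxb rfl
    have hfH : H.LocallyInjective f := fun u v huv => hf u v (Or.inl huv)
    by_cases hbp : b = p
    · subst b
      have haH : a ∈ H.verts := by
        rcases Finset.mem_insert.mp haG with rfl | h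
        · exact absurd rfl hab
        · exact h
      have hmorse := FSGraph.morse_sub H f hfH
      rw [hchi] at hmorse
      have hterm : ∀ x ∈ H.verts, x ≠ a → (1 - (H.subSphere f x).euler) = 0 := by
        intro x hxH hxa
        have hxG : x ∈ G.verts := Finset.mem_insert_of_mem hxH
        have hxp : x ≠ p := FSGraph.ne_p_of_mem H p hp hxH
        obtain ⟨hsub, -⟩ := hnotcrit x hxG hxa hxp
        have hxlt : f x < f p := hmaxu x hxG hxp
        rw [show G.subSphere f x = H.subSphere f x from
          FSGraph.subSphere_cone_eq H p hp f hxH (not_lt.mpr (le_of_lt hxlt))] at hsub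
        rw [FSGraph.contractible_euler hsub]
        ring
      have haterm : (1 - (H.subSphere f a).euler) = 1 := by
        have hempty : (H.subSphere f a).verts = ∅ := by
          ext y
          simp only [FSGraph.subSphere, FSGraph.sphere, FSGraph.induce, Finset.mem_filter,
            Finset.notMem_empty, iff_false]
          rintro ⟨⟨hy1, -⟩, hy3⟩
          exact absurd hy3 (not_lt.mpr (hamin y (Finset.mem_insert_of_mem hy1)))
        rw [FSGraph.euler_empty hempty]
        ring
      rw [Finset.sum_eq_single_of_mem a haH hterm, haterm] at hmorse
      exact absurd hmorse (by norm_num)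
    · by_cases hap : a = p
      · subst a
        have hbH : b ∈ H.verts := by
          rcases Finset.mem_insert.mp hbG with h | h
          · exact absurd h hbp
          · exact h
        have hmorse := FSGraph.morse_sup H f hfH
        rw [hchi] at hmorse
        have hterm : ∀ x ∈ H.verts, x ≠ b → (1 - (H.supSphere f x).euler) = 0 := by
          intro x hxH hxb
          have hxG : x ∈ G.verts := Finset.mem_insert_of_mem hxH
          have hxp : x ≠ p := FSGraph.ne_p_of_mem H p hp hxH
          obtain ⟨-, hsup⟩ := hnotcrit x hxG hxp hxb
          have hxgt : f p < f x := hminu x hxG hxp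
          rw [show G.supSphere f x = H.supSphere f x from
            FSGraph.supSphere_cone_eq H p hp f hxH (not_lt.mpr (le_of_lt hxgt))] at hsup
          rw [FSGraph.contractible_euler hsup]
          ring
        have hbterm : (1 - (H.supSphere f b).euler) = 1 := by
          have hempty : (H.supSphere f b).verts = ∅ := by
            ext y
            simp only [FSGraph.supSphere, FSGraph.sphere, FSGraph.induce, Finset.mem_filter,
              Finset.notMem_empty, iff_false]
            rintro ⟨⟨hy1, -⟩, hy3⟩
            exact absurd hy3 (not_lt.mpr (hbmax y (Finset.mem_insert_of_mem hy1)))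
          rw [FSGraph.euler_empty hempty]
          ring
        rw [Finset.sum_eq_single_of_mem b hbH hterm, hbterm] at hmorse
        exact absurd hmorse (by norm_num)
      · obtain ⟨hsubp, hsupp⟩ := hnotcrit p hpG (fun h => hap h.symm) (fun h => hbp h.symm)
        rw [show G.subSphere f p = H.induce (fun y => f y < f p) from
          FSGraph.subSphere_cone_apex H p hp f] at hsubp
        rw [show G.supSphere f p = H.induce (fun y => f p < f y) from
          FSGraph.supSphere_cone_apex H p hp f] at hsupp
        have hc' : ∀ v ∈ H.verts, f v ≠ f p := fun v hv e =>
          hf p v ((FSGraph.cone_adj_apex H p hp).mpr hv) e.symm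
        have hsplit := FSGraph.two_graph_split hH f (f p) hc' hsubp hsupp
        rw [hchi] at hsplit
        exact absurd hsplit (by norm_num)
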